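/- Let z > 0 and B ≥ 1 be real numbers. For every real ν with 0 ≤ ν ≤ (1/2)·(B − 1)·z − 1/2, the ratio of consecutive modified Bessel functions of the second kind satisfies 1 < K_{ν+1}(z)/K_ν(z) ≤ B. (Hence the exponential of the difference of logarithms, exp(log K_{ν+1}(z) − log K_ν(z)), neither overflows above B nor underflows below 1.) -/

import Mathlib

open Real MeasureTheory

/-- Modified Bessel function of the second kind, via its integral representation. -/
noncomputable def besselK (ν z : ℝ) : ℝ :=
  ∫ t in Set.Ioi (0 : ℝ), Real.exp (-z * Real.cosh t) * Real.cosh (ν * t)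

private lemma bk_cont (c z : ℝ) :
    Continuous fun t : ℝ => Real.exp (-z * Real.cosh t) * Real.cosh (c * t) := by
  continuity

private lemma bk_ev (c z : ℝ) (hz : 0 < z) :
    ∀ᶠ t in Filter.atTop,
      Real.exp (-z * Real.cosh t) * Real.cosh (c * t) ≤ Real.exp (-t) := by
  have h1 := (Real.tendsto_exp_div_pow_atTop 1).eventually_ge_atTop (2 * (|c| + 1) / z)
  filter_upwards [h1, Filter.eventually_ge_atTop (1 : ℝ)] with t ht ht1
  have ht0 : (0:ℝ) < t := lt_of_lt_of_le one_pos ht1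
  have hct : Real.cosh (c * t) ≤ Real.exp (|c| * t) := by
    rw [Real.cosh_eq]
    have h2 : Real.exp (c * t) ≤ Real.exp (|c| * t) := by
      apply Real.exp_le_exp.2
      nlinarith [le_abs_self c]
    have h3 : Real.exp (-(c * t)) ≤ Real.exp (|c| * t) := by
      apply Real.exp_le_exp.2
      nlinarith [neg_abs_le c]
    linarith
  have hcosh : (|c| + 1) * t ≤ z * Real.cosh t := by
    rw [pow_one, le_div_iff₀ ht0, div_mul_eq_mul_div, div_le_iff₀ hz] at ht
    have hc2 : Real.exp t ≤ 2 * Real.cosh t := by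
      rw [Real.cosh_eq]
      nlinarith [Real.exp_pos (-t)]
    have habs : (0:ℝ) ≤ |c| := abs_nonneg c
    nlinarith [mul_le_mul_of_nonneg_left hc2 hz.le]
  calc Real.exp (-z * Real.cosh t) * Real.cosh (c * t)
      ≤ Real.exp (-z * Real.cosh t) * Real.exp (|c| * t) :=
        mul_le_mul_of_nonneg_left hct (Real.exp_pos _).le
    _ = Real.exp (|c| * t - z * Real.cosh t) := by
        rw [← Real.exp_add]; ring_nf
    _ ≤ Real.exp (-t) := Real.exp_le_exp.2 (by linarith)

private lemma bk_int (c z : ℝ) (hz : 0 < z) :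
    IntegrableOn (fun t => Real.exp (-z * Real.cosh t) * Real.cosh (c * t)) (Set.Ioi 0) := by
  apply integrable_of_isBigO_exp_neg one_pos ((bk_cont c z).continuousOn)
  rw [Asymptotics.isBigO_iff]
  refine ⟨1, ?_⟩
  filter_upwards [bk_ev c z hz] with t ht
  rw [one_mul, Real.norm_eq_abs, Real.norm_eq_abs, abs_of_nonneg (by positivity),
    abs_of_nonneg (Real.exp_pos _).le, neg_one_mul]
  exact ht

private lemma bk_tendsto (c z : ℝ) (hz : 0 < z) :
    Filter.Tendsto (fun t => Real.exp (-z * Real.cosh t) * Real.cosh (c * t))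
      Filter.atTop (nhds 0) := by
  apply squeeze_zero' (Filter.Eventually.of_forall fun t => by positivity) (bk_ev c z hz)
  exact Real.tendsto_exp_neg_atTop_nhds_zero

private lemma bk_pos (c z : ℝ) (hz : 0 < z) : 0 < besselK c z := by
  unfold besselK
  rw [setIntegral_pos_iff_support_of_nonneg_ae
    (Filter.Eventually.of_forall fun t => by positivity) (bk_int c z hz)]
  refine lt_of_lt_of_le ?_ (measure_mono (fun t ht => ⟨?_, ht⟩))
  · rw [Real.volume_Ioi]; exact ENNReal.zero_lt_top
  · have : 0 < Real.exp (-z * Real.cosh t) * Real.cosh (c * t) := by positivity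
    exact this.ne'

private lemma bk_key (ν t : ℝ) :
    Real.sinh t * Real.sinh ((ν + 1/2) * t) =
      (Real.cosh ((ν + 1) * t) - Real.cosh (ν * t)) * Real.cosh (t/2) := by
  have e1 : (ν + 1/2) * t = ν * t + t/2 := by ring
  have e2 : (ν + 1) * t = ν * t + (t/2 + t/2) := by ring
  have e3 : Real.sinh t = Real.sinh (t/2 + t/2) := by norm_num
  rw [e1, e2, e3]
  simp only [Real.sinh_add, Real.cosh_add]
  have h := Real.cosh_sq_sub_sinh_sq (t/2)
  linear_combination (-(Real.cosh (ν*t) * Real.cosh (t/2))) * h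

private noncomputable def bkG (ν t : ℝ) : ℝ :=
  (Real.cosh ((ν + 1/2) * t) * (ν + 1/2) * Real.cosh (t/2) -
      Real.sinh ((ν + 1/2) * t) * (Real.sinh (t/2) * (1/2))) / Real.cosh (t/2) ^ 2

private noncomputable def bkF (ν z t : ℝ) : ℝ :=
  -(1/z) * (Real.exp (-z * Real.cosh t) * (Real.sinh ((ν + 1/2) * t) / Real.cosh (t/2)))

private noncomputable def bkD (ν z t : ℝ) : ℝ :=
  Real.exp (-z * Real.cosh t) * Real.cosh ((ν + 1) * t) -
    Real.exp (-z * Real.cosh t) * Real.cosh (ν * t) -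
    (1/z) * (Real.exp (-z * Real.cosh t) * bkG ν t)

private lemma bk_hasDeriv (ν z : ℝ) (hz : 0 < z) (t : ℝ) :
    HasDerivAt (bkF ν z) (bkD ν z t) t := by
  have hc : Real.cosh (t/2) ≠ 0 := (Real.cosh_pos _).ne'
  have h1 : HasDerivAt (fun y : ℝ => Real.exp (-z * Real.cosh y))
      (Real.exp (-z * Real.cosh t) * (-z * Real.sinh t)) t :=
    ((Real.hasDerivAt_cosh t).const_mul (-z)).exp
  have h2 : HasDerivAt (fun y : ℝ => Real.sinh ((ν + 1/2) * y))
      (Real.cosh ((ν + 1/2) * t) * (ν + 1/2)) t := by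
    simpa using ((hasDerivAt_id t).const_mul (ν + 1/2)).sinh
  have h3 : HasDerivAt (fun y : ℝ => Real.cosh (y/2)) (Real.sinh (t/2) * (1/2)) t := by
    simpa using ((hasDerivAt_id t).div_const 2).cosh
  have h4 := h2.div h3 hc
  have h5 := (h1.mul h4).const_mul (-(1/z))
  refine h5.congr_deriv ?_
  symm
  simp only [Pi.div_apply]
  have hq : Real.sinh t * Real.sinh ((ν + 1/2) * t) / Real.cosh (t/2) =
      Real.cosh ((ν + 1) * t) - Real.cosh (ν * t) := by
    rw [bk_key ν t, mul_div_assoc, div_self hc, mul_one]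
  have hC1 : Real.cosh ((ν + 1) * t) =
      Real.cosh (ν * t) + Real.sinh t * Real.sinh ((ν + 1/2) * t) / Real.cosh (t/2) := by
    rw [hq]; ring
  unfold bkD bkG
  rw [hC1]
  field_simp
  ring

private lemma bk_Gbounds (ν t : ℝ) (hν : 0 ≤ ν) (ht : 0 ≤ t) :
    0 ≤ bkG ν t ∧ bkG ν t ≤ (2 * ν + 1) * Real.cosh (ν * t) := by
  have hc : (0:ℝ) < Real.cosh (t/2) := Real.cosh_pos _
  have hst : 0 ≤ (ν + 1/2) * t := by positivity
  have hs1 : 0 ≤ Real.sinh ((ν + 1/2) * t) := Real.sinh_nonneg_iff.2 hst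
  have hs2 : 0 ≤ Real.sinh (t/2) := Real.sinh_nonneg_iff.2 (by linarith)
  have hle1 : Real.sinh ((ν + 1/2) * t) ≤ Real.cosh ((ν + 1/2) * t) := by
    nlinarith [Real.cosh_sub_sinh ((ν + 1/2) * t), Real.exp_pos (-((ν + 1/2) * t))]
  have hle2 : Real.sinh (t/2) ≤ Real.cosh (t/2) := by
    nlinarith [Real.cosh_sub_sinh (t/2), Real.exp_pos (-(t/2))]
  have hle3 : Real.sinh (ν * t) ≤ Real.cosh (ν * t) := by
    nlinarith [Real.cosh_sub_sinh (ν * t), Real.exp_pos (-(ν * t))]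
  have hs3 : 0 ≤ Real.sinh (ν * t) := Real.sinh_nonneg_iff.2 (by positivity)
  have hCadd : Real.cosh ((ν + 1/2) * t) =
      Real.cosh (ν * t) * Real.cosh (t/2) + Real.sinh (ν * t) * Real.sinh (t/2) := by
    rw [show (ν + 1/2) * t = ν * t + t/2 by ring, Real.cosh_add]
  have hCp := Real.cosh_pos ((ν + 1/2) * t)
  have hCp2 := Real.cosh_pos (ν * t)
  constructor
  · unfold bkG
    apply div_nonneg _ (by positivity)
    nlinarith [mul_le_mul hle1 hle2 hs2 hCp.le,
      mul_nonneg hν (mul_nonneg hCp.le hc.le)]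
  · unfold bkG
    rw [div_le_iff₀ (by positivity)]
    have hbd : Real.cosh ((ν + 1/2) * t) ≤ 2 * Real.cosh (ν * t) * Real.cosh (t/2) := by
      rw [hCadd]
      nlinarith [mul_le_mul hle3 hle2 hs2 hCp2.le]
    nlinarith [mul_le_mul_of_nonneg_left hbd
        (by positivity : (0:ℝ) ≤ (ν + 1/2) * Real.cosh (t/2)),
      mul_nonneg hs1 (mul_nonneg hs2 (by norm_num : (0:ℝ) ≤ (1:ℝ)/2))]

private lemma bk_Gcont (ν : ℝ) : Continuous (bkG ν) := by
  unfold bkG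
  apply Continuous.div (by continuity) (by continuity)
  exact fun t => pow_ne_zero _ (Real.cosh_pos _).ne'

theorem besselK_ratio_bounds (z B : ℝ) (hz : 0 < z) (hB : 1 ≤ B)
    (ν : ℝ) (hν : 0 ≤ ν) (hν' : ν ≤ (1 / 2) * (B - 1) * z - 1 / 2) :
    1 < besselK (ν + 1) z / besselK ν z ∧ besselK (ν + 1) z / besselK ν z ≤ B := by
  have hz' : z ≠ 0 := hz.ne'
  have I1 := bk_int (ν + 1) z hz
  have I0 := bk_int ν z hz
  have hK0 : 0 < besselK ν z := bk_pos ν z hz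
  have hGc : Continuous fun t => Real.exp (-z * Real.cosh t) * bkG ν t :=
    (Real.continuous_exp.comp (by continuity)).mul (bk_Gcont ν)
  have IG : IntegrableOn (fun t => Real.exp (-z * Real.cosh t) * bkG ν t) (Set.Ioi 0) := by
    apply Integrable.mono'
      (g := fun t => (2 * ν + 1) * (Real.exp (-z * Real.cosh t) * Real.cosh (ν * t)))
      (I0.const_mul (2 * ν + 1)) hGc.aestronglyMeasurable.restrict
    filter_upwards [ae_restrict_mem measurableSet_Ioi] with t ht
    obtain ⟨hg0, hg1⟩ := bk_Gbounds ν t hν (le_of_lt ht)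
    rw [Real.norm_eq_abs, abs_of_nonneg (mul_nonneg (Real.exp_pos _).le hg0)]
    nlinarith [mul_le_mul_of_nonneg_left hg1 (Real.exp_pos (-z * Real.cosh t)).le]
  have I10 : IntegrableOn (fun t => Real.exp (-z * Real.cosh t) * Real.cosh ((ν + 1) * t) -
      Real.exp (-z * Real.cosh t) * Real.cosh (ν * t)) (Set.Ioi 0) := I1.sub I0
  have ID : IntegrableOn (bkD ν z) (Set.Ioi 0) := I10.sub (IG.const_mul (1/z))
  have hFlim : Filter.Tendsto (bkF ν z) Filter.atTop (nhds 0) := by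
    have h0 := (bk_tendsto (ν + 1/2) z hz).const_mul (-(1/z))
    rw [mul_zero] at h0
    apply tendsto_of_tendsto_of_tendsto_of_le_of_le' h0 tendsto_const_nhds
    · filter_upwards [Filter.eventually_ge_atTop (0:ℝ)] with t ht
      have hs1 : 0 ≤ Real.sinh ((ν + 1/2) * t) :=
        Real.sinh_nonneg_iff.2 (mul_nonneg (by linarith) ht)
      have hq1 : Real.sinh ((ν + 1/2) * t) / Real.cosh (t/2) ≤ Real.cosh ((ν + 1/2) * t) := by
        have h := div_le_self hs1 (Real.one_le_cosh (t/2))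
        nlinarith [Real.cosh_sub_sinh ((ν + 1/2) * t), Real.exp_pos (-((ν + 1/2) * t))]
      unfold bkF
      have hE := (Real.exp_pos (-z * Real.cosh t)).le
      have h1z : (0:ℝ) ≤ 1/z := by positivity
      nlinarith [mul_le_mul_of_nonneg_left (mul_le_mul_of_nonneg_left hq1 hE) h1z]
    · filter_upwards [Filter.eventually_ge_atTop (0:ℝ)] with t ht
      have hs1 : 0 ≤ Real.sinh ((ν + 1/2) * t) :=
        Real.sinh_nonneg_iff.2 (mul_nonneg (by linarith) ht)
      have hq0 : 0 ≤ Real.sinh ((ν + 1/2) * t) / Real.cosh (t/2) :=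
        div_nonneg hs1 (Real.cosh_pos _).le
      unfold bkF
      have hE := (Real.exp_pos (-z * Real.cosh t)).le
      have h1z : (0:ℝ) ≤ 1/z := by positivity
      nlinarith [mul_nonneg hE hq0]
  have hIBP : ∫ t in Set.Ioi (0:ℝ), bkD ν z t = 0 - bkF ν z 0 :=
    integral_Ioi_of_hasDerivAt_of_tendsto' (fun x _ => bk_hasDeriv ν z hz x) ID hFlim
  have hF0 : bkF ν z 0 = 0 := by simp [bkF]
  have hsplit : ∫ t in Set.Ioi (0:ℝ), bkD ν z t =
      besselK (ν + 1) z - besselK ν z -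
        (1/z) * ∫ t in Set.Ioi (0:ℝ), Real.exp (-z * Real.cosh t) * bkG ν t := by
    unfold besselK bkD
    rw [integral_sub I10 (IG.const_mul (1/z)), integral_sub I1 I0, integral_const_mul]
  set JG := ∫ t in Set.Ioi (0:ℝ), Real.exp (-z * Real.cosh t) * bkG ν t with hJGdef
  have hKeq : besselK (ν + 1) z = besselK ν z + (1/z) * JG := by
    rw [hsplit, hF0] at hIBP; linarith
  have hJG0 : 0 ≤ JG :=
    setIntegral_nonneg measurableSet_Ioi fun t ht =>
      mul_nonneg (Real.exp_pos _).le (bk_Gbounds ν t hν ht.le).1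
  have hJG1 : JG ≤ (2 * ν + 1) * besselK ν z := by
    unfold besselK
    rw [hJGdef, ← integral_const_mul]
    apply setIntegral_mono_on IG (I0.const_mul _) measurableSet_Ioi
    intro t ht
    have h := (bk_Gbounds ν t hν ht.le).2
    nlinarith [mul_le_mul_of_nonneg_left h (Real.exp_pos (-z * Real.cosh t)).le]
  have hlt : besselK ν z < besselK (ν + 1) z := by
    have hpos : 0 < ∫ t in Set.Ioi (0:ℝ),
        (Real.exp (-z * Real.cosh t) * Real.cosh ((ν + 1) * t) -
          Real.exp (-z * Real.cosh t) * Real.cosh (ν * t)) := by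
      rw [setIntegral_pos_iff_support_of_nonneg_ae ?_ I10]
      · refine lt_of_lt_of_le ?_ (measure_mono fun t ht => ⟨?_, ht⟩)
        · rw [Real.volume_Ioi]; exact ENNReal.zero_lt_top
        · have ht' : (0:ℝ) < t := ht
          have hcc : Real.cosh (ν * t) < Real.cosh ((ν + 1) * t) := by
            rw [Real.cosh_lt_cosh, abs_of_nonneg (mul_nonneg hν ht'.le),
              abs_of_nonneg (mul_nonneg (by linarith) ht'.le)]
            nlinarith
          have h2 : 0 < Real.exp (-z * Real.cosh t) * Real.cosh ((ν + 1) * t) -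
              Real.exp (-z * Real.cosh t) * Real.cosh (ν * t) := by
            nlinarith [Real.exp_pos (-z * Real.cosh t)]
          exact h2.ne'
      · filter_upwards [ae_restrict_mem measurableSet_Ioi] with t ht
        have ht0 : (0:ℝ) ≤ t := (Set.mem_Ioi.1 ht).le
        have hcc : Real.cosh (ν * t) ≤ Real.cosh ((ν + 1) * t) := by
          rw [Real.cosh_le_cosh, abs_of_nonneg (mul_nonneg hν ht0),
            abs_of_nonneg (mul_nonneg (by linarith) ht0)]
          nlinarith
        simp only [Pi.zero_apply]
        nlinarith [Real.exp_pos (-z * Real.cosh t)]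
    rw [integral_sub I1 I0] at hpos
    unfold besselK
    linarith [hpos]
  constructor
  · exact (one_lt_div hK0).2 hlt
  · rw [div_le_iff₀ hK0]
    have h2ν : (2 * ν + 1) / z ≤ B - 1 := by
      rw [div_le_iff₀ hz]; nlinarith
    calc besselK (ν + 1) z = besselK ν z + (1/z) * JG := hKeq
      _ ≤ besselK ν z + (1/z) * ((2 * ν + 1) * besselK ν z) := by
          have h1z : (0:ℝ) ≤ 1/z := by positivity
          nlinarith [mul_le_mul_of_nonneg_left hJG1 h1z]
      _ = besselK ν z + (2 * ν + 1) / z * besselK ν z := by ring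
      _ ≤ besselK ν z + (B - 1) * besselK ν z := by
          nlinarith [mul_le_mul_of_nonneg_right h2ν hK0.le]
      _ = B * besselK ν z := by ring
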